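/- Let γ : [a,b] → ℂ be a path (a continuous function on a closed interval). If diam(γ([a,b])) ≤ 1/2, then (1/(2π)) · diam(γ([a,b])) ≤ len(γ) ≤ 2 · diam(γ([a,b])), where diam denotes Euclidean diameter. -/

import Mathlib

open Set MeasureTheory

noncomputable section

/-- The closed horizontal strip `S_j = {a + ib : a ∈ ℝ, b ∈ [j, j+1]} ⊆ ℂ`. -/
def hStrip (j : ℤ) : Set ℂ := {z : ℂ | (j : ℝ) ≤ z.im ∧ z.im ≤ (j : ℝ) + 1}

/-- The strip `S^{x,t,μ}_j = μ·e^{tπi}·(S_j + ix)`. -/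
def Strip (x t μ : ℝ) (j : ℤ) : Set ℂ :=
  (fun z : ℂ => (μ : ℂ) * Complex.exp ((t : ℂ) * (Real.pi : ℂ) * Complex.I) *
    (z + (x : ℂ) * Complex.I)) '' hStrip j

/-- The orthogonal projection of `ℂ` onto the line `{r·e^{(t+1/2)πi} : r ∈ ℝ}`,
composed with the natural isometric identification of this line with `ℝ`
(so that Euclidean diameters of subsets are preserved). -/
def projPerp (t : ℝ) (z : ℂ) : ℝ :=
  (z * Complex.exp (-(((t : ℂ) + 1 / 2) * (Real.pi : ℂ) * Complex.I))).re

/-- `‖A‖_t`, the (Euclidean) diameter of the orthogonal projection `proj⊥_t(A)`. -/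
def normT (t : ℝ) (A : Set ℂ) : ℝ := Metric.diam (projPerp t '' A)

/-- The collection of all connected components of the sets `γ⁻¹(S^{x,t,μ}_j)`, `j ∈ ℤ`. -/
def stripComponents {X : Type*} [TopologicalSpace X] (γ : X → ℂ) (x t μ : ℝ) : Set (Set X) :=
  {C | ∃ j : ℤ, ∃ p ∈ γ ⁻¹' Strip x t μ j, C = connectedComponentIn (γ ⁻¹' Strip x t μ j) p}

/-- The components whose image under `proj⊥_t ∘ γ` is non-degenerate. -/
def ndComponents {X : Type*} [TopologicalSpace X] (γ : X → ℂ) (x t μ : ℝ) : Set (Set X) :=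
  {C | C ∈ stripComponents γ x t μ ∧ (projPerp t '' (γ '' C)).Nontrivial}

/-- `L^{x,t,μ}(γ) = ∑ₙ ‖γ(C_n)‖_t / 2ⁿ`, where `⟨C_n⟩ₙ` enumerates the components of
the sets `γ⁻¹(S^{x,t,μ}_j)` (`j ∈ ℤ`) with non-degenerate projection, in non-increasing
order of `‖γ(C_n)‖_t`.  Since the weights `2⁻ⁿ` are strictly decreasing, this sum is equal
to the supremum, over all finite injective enumerations `e` of such components, of
`∑ₙ ‖γ(e n)‖_t / 2ⁿ`; we take this supremum as the formal definition. -/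
def Lfn {X : Type*} [TopologicalSpace X] (γ : X → ℂ) (x t μ : ℝ) : ℝ :=
  sSup {r : ℝ | ∃ (N : ℕ) (e : Fin N → Set X), Function.Injective e ∧
    (∀ n, e n ∈ ndComponents γ x t μ) ∧
    r = ∑ n : Fin N, normT t (γ '' e n) / (2 : ℝ) ^ (n : ℕ)}

/-- `len(γ) = ∫₀¹∫₀¹∫₀¹ L^{x,t,μ}(γ) dx dt dμ`. -/
def len {X : Type*} [TopologicalSpace X] (γ : X → ℂ) : ℝ :=
  ∫ μ in (0:ℝ)..1, ∫ t in (0:ℝ)..1, ∫ x in (0:ℝ)..1, Lfn γ x t μ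

/-- `len` of the restriction of `γ : ℝ → ℂ` to the closed interval `[a,b]`. -/
def lenOn (γ : ℝ → ℂ) (a b : ℝ) : ℝ := len (fun s : Icc a b => γ s)

namespace LenAux
open Complex

def fq (t : ℝ) (z : ℂ) : ℝ := (z * Complex.exp (-((t : ℂ) * (Real.pi:ℂ) * Complex.I))).im

lemma exp_neg_pi_div_two : Complex.exp (-((Real.pi:ℂ)/2 * Complex.I)) = -Complex.I := by
  have h : (-((Real.pi:ℂ)/2 * Complex.I)) = ((-(Real.pi/2) : ℝ) : ℂ) * Complex.I := by
    push_cast; ring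
  rw [h, Complex.exp_mul_I, ← Complex.ofReal_cos, ← Complex.ofReal_sin]
  simp [Real.cos_pi_div_two, Real.sin_pi_div_two]

lemma projPerp_eq_fq (t : ℝ) (z : ℂ) : projPerp t z = fq t z := by
  unfold projPerp fq
  have h : (-(((t : ℂ) + 1 / 2) * (Real.pi:ℂ) * Complex.I))
      = (-((t:ℂ) * Real.pi * Complex.I)) + (-((Real.pi:ℂ)/2 * Complex.I)) := by ring
  rw [h, Complex.exp_add, exp_neg_pi_div_two]
  have h2 : z * (Complex.exp (-((t:ℂ) * Real.pi * Complex.I)) * -Complex.I)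
      = (z * Complex.exp (-((t:ℂ) * Real.pi * Complex.I))) * -Complex.I := by ring
  rw [h2]
  simp [Complex.mul_re]

lemma mem_Strip_iff {x t μ : ℝ} (hμ : 0 < μ) (j : ℤ) (z : ℂ) :
    z ∈ Strip x t μ j ↔ fq t z ∈ Icc (μ*(j+x)) (μ*(j+x)+μ) := by
  have hE : Complex.exp ((t : ℂ) * Real.pi * Complex.I) *
      Complex.exp (-((t : ℂ) * Real.pi * Complex.I)) = 1 := by
    rw [← Complex.exp_add]; simp
  unfold Strip hStrip
  constructor
  · rintro ⟨w, ⟨h1, h2⟩, rfl⟩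
    have : fq t ((μ:ℂ) * Complex.exp ((t : ℂ) * Real.pi * Complex.I) * (w + (x:ℂ)*Complex.I))
        = μ * (w.im + x) := by
      unfold fq
      have h3 : (μ:ℂ) * Complex.exp ((t : ℂ) * Real.pi * Complex.I) * (w + (x:ℂ)*Complex.I) *
          Complex.exp (-((t : ℂ) * Real.pi * Complex.I))
          = (μ:ℂ) * (w + (x:ℂ)*Complex.I) * (Complex.exp ((t : ℂ) * Real.pi * Complex.I) *
            Complex.exp (-((t : ℂ) * Real.pi * Complex.I))) := by ring
      rw [h3, hE, mul_one]
      simp [Complex.mul_im, Complex.add_im, Complex.add_re]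
    rw [this]
    constructor
    · nlinarith
    · nlinarith
  · intro hin
    obtain ⟨hl, hr⟩ := hin
    have hμ' : (μ:ℂ) ≠ 0 := by exact_mod_cast hμ.ne'
    refine ⟨z * Complex.exp (-((t : ℂ) * Real.pi * Complex.I)) / μ - (x:ℂ)*Complex.I, ?_, ?_⟩
    · have him : (z * Complex.exp (-((t : ℂ) * Real.pi * Complex.I)) / μ - (x:ℂ)*Complex.I).im
          = fq t z / μ - x := by
        unfold fq; simp
      have h1 : (j:ℝ) ≤ fq t z / μ - x := by
        rw [le_sub_iff_add_le, le_div_iff₀ hμ]; linarith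
      have h2 : fq t z / μ - x ≤ (j:ℝ) + 1 := by
        rw [sub_le_iff_le_add, div_le_iff₀ hμ]; linarith
      simp only [mem_setOf_eq, him]
      exact ⟨h1, h2⟩
    · show (μ:ℂ) * Complex.exp ((t : ℂ) * Real.pi * Complex.I) * _ = z
      rw [sub_add_cancel]
      calc (μ:ℂ) * Complex.exp ((t : ℂ) * Real.pi * Complex.I) *
            (z * Complex.exp (-((t : ℂ) * Real.pi * Complex.I)) / μ)
          = (Complex.exp ((t : ℂ) * Real.pi * Complex.I) *
            Complex.exp (-((t : ℂ) * Real.pi * Complex.I))) * z * ((μ:ℂ) / μ) := by ring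
        _ = z := by rw [hE, div_self hμ']; ring

variable {a b : ℝ} {γ : ℝ → ℂ}

lemma projPerp_lip (t : ℝ) (z w : ℂ) : dist (projPerp t z) (projPerp t w) ≤ dist z w := by
  rw [Real.dist_eq, Complex.dist_eq]
  have h1 : projPerp t z - projPerp t w
      = ((z - w) * Complex.exp (-(((t : ℂ) + 1 / 2) * (Real.pi:ℂ) * Complex.I))).re := by
    rw [projPerp, projPerp, ← Complex.sub_re, ← sub_mul]
  rw [h1]
  refine le_trans (Complex.abs_re_le_norm _) ?_
  rw [norm_mul]
  have h2 : (-(((t : ℂ) + 1 / 2) * (Real.pi:ℂ) * Complex.I))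
      = ((-((t+1/2)*Real.pi) : ℝ) : ℂ) * Complex.I := by push_cast; ring
  rw [h2, Complex.norm_exp_ofReal_mul_I, mul_one]

/-- The defining set of `Lfn`. -/
def SS (γ' : Icc a b → ℂ) (x t μ : ℝ) : Set ℝ :=
  {r : ℝ | ∃ (N : ℕ) (e : Fin N → Set (Icc a b)), Function.Injective e ∧
    (∀ n, e n ∈ ndComponents γ' x t μ) ∧
    r = ∑ n : Fin N, normT t (γ' '' e n) / (2 : ℝ) ^ (n : ℕ)}

lemma Lfn_eq_sSup_SS (γ' : Icc a b → ℂ) (x t μ : ℝ) : Lfn γ' x t μ = sSup (SS γ' x t μ) := rfl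

lemma zero_mem_SS (γ' : Icc a b → ℂ) (x t μ : ℝ) : (0:ℝ) ∈ SS γ' x t μ :=
  ⟨0, fun n => n.elim0, fun n => n.elim0, fun n => n.elim0, by simp⟩

lemma normT_le_diam (hγ : ContinuousOn γ (Icc a b)) (t : ℝ) (C : Set (Icc a b)) :
    normT t ((fun s : Icc a b => γ s) '' C) ≤ Metric.diam (γ '' Icc a b) := by
  have hbd : Bornology.IsBounded (γ '' Icc a b) :=
    (isCompact_Icc.image_of_continuousOn hγ).isBounded
  refine Metric.diam_le_of_forall_dist_le Metric.diam_nonneg ?_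
  rintro y1 ⟨z1, hz1, rfl⟩ y2 ⟨z2, hz2, rfl⟩
  have m1 : z1 ∈ γ '' Icc a b := by
    obtain ⟨s, _, rfl⟩ := hz1; exact ⟨s, s.2, rfl⟩
  have m2 : z2 ∈ γ '' Icc a b := by
    obtain ⟨s, _, rfl⟩ := hz2; exact ⟨s, s.2, rfl⟩
  exact le_trans (projPerp_lip t z1 z2) (Metric.dist_le_diam_of_mem hbd m1 m2)

lemma SS_le (hγ : ContinuousOn γ (Icc a b)) (x t μ : ℝ) :
    ∀ r ∈ SS (fun s : Icc a b => γ s) x t μ, r ≤ 2 * Metric.diam (γ '' Icc a b) := by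
  rintro r ⟨N, e, -, -, rfl⟩
  set d := Metric.diam (γ '' Icc a b) with hd
  have hd0 : 0 ≤ d := Metric.diam_nonneg
  calc ∑ n : Fin N, normT t ((fun s : Icc a b => γ s) '' e n) / (2 : ℝ) ^ (n : ℕ)
      ≤ ∑ n : Fin N, d * (1/2) ^ (n : ℕ) := by
        refine Finset.sum_le_sum fun n _ => ?_
        have hb := normT_le_diam hγ t (e n)
        rw [one_div, inv_pow, ← div_eq_mul_inv]
        gcongr
    _ = d * ∑ n : Fin N, (1/(2:ℝ)) ^ (n : ℕ) := by rw [Finset.mul_sum]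
    _ ≤ d * 2 := by
        refine mul_le_mul_of_nonneg_left ?_ hd0
        rw [Fin.sum_univ_eq_sum_range]
        exact sum_geometric_two_le N
    _ = 2 * d := by ring

lemma bddAbove_SS (hγ : ContinuousOn γ (Icc a b)) (x t μ : ℝ) :
    BddAbove (SS (fun s : Icc a b => γ s) x t μ) :=
  ⟨2 * Metric.diam (γ '' Icc a b), SS_le hγ x t μ⟩

lemma Lfn_nonneg (hγ : ContinuousOn γ (Icc a b)) (x t μ : ℝ) :
    0 ≤ Lfn (fun s : Icc a b => γ s) x t μ :=
  le_csSup (bddAbove_SS hγ x t μ) (zero_mem_SS _ x t μ)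

lemma Lfn_le (hγ : ContinuousOn γ (Icc a b)) (x t μ : ℝ) :
    Lfn (fun s : Icc a b => γ s) x t μ ≤ 2 * Metric.diam (γ '' Icc a b) :=
  Real.sSup_le (SS_le hγ x t μ) (by positivity)

lemma integral01_nonneg_le {f : ℝ → ℝ} {c : ℝ} (hc : 0 ≤ c)
    (h0 : ∀ y, 0 ≤ f y) (h1 : ∀ y, f y ≤ c) :
    0 ≤ (∫ y in (0:ℝ)..1, f y) ∧ (∫ y in (0:ℝ)..1, f y) ≤ c := by
  by_cases hint : IntervalIntegrable f volume 0 1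
  · constructor
    · exact intervalIntegral.integral_nonneg zero_le_one fun y _ => h0 y
    · calc (∫ y in (0:ℝ)..1, f y) ≤ ∫ _ in (0:ℝ)..1, c :=
            intervalIntegral.integral_mono_on zero_le_one hint
              intervalIntegrable_const fun y _ => h1 y
        _ = c := by simp
  · rw [intervalIntegral.integral_undef hint]
    exact ⟨le_refl 0, hc⟩

lemma lenOn_nonneg_le (hab : a ≤ b) (hγ : ContinuousOn γ (Icc a b)) :
    0 ≤ lenOn γ a b ∧ lenOn γ a b ≤ 2 * Metric.diam (γ '' Icc a b) := by
  set d := Metric.diam (γ '' Icc a b) with hd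
  have hd0 : 0 ≤ d := Metric.diam_nonneg
  have hx : ∀ t μ : ℝ, 0 ≤ (∫ x in (0:ℝ)..1, Lfn (fun s : Icc a b => γ s) x t μ)
      ∧ (∫ x in (0:ℝ)..1, Lfn (fun s : Icc a b => γ s) x t μ) ≤ 2*d := fun t μ =>
    integral01_nonneg_le (by positivity) (fun x => Lfn_nonneg hγ x t μ) (fun x => Lfn_le hγ x t μ)
  have ht : ∀ μ : ℝ, 0 ≤ (∫ t in (0:ℝ)..1, ∫ x in (0:ℝ)..1,
        Lfn (fun s : Icc a b => γ s) x t μ)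
      ∧ (∫ t in (0:ℝ)..1, ∫ x in (0:ℝ)..1, Lfn (fun s : Icc a b => γ s) x t μ) ≤ 2*d :=
    fun μ => integral01_nonneg_le (by positivity) (fun t => (hx t μ).1) (fun t => (hx t μ).2)
  exact integral01_nonneg_le (by positivity) (fun μ => (ht μ).1) (fun μ => (ht μ).2)

end LenAux
namespace LenAux

variable {a b : ℝ} {γ : ℝ → ℂ}

lemma preimage_Strip {x t μ : ℝ} (hμ : 0 < μ) (j : ℤ) :
    (fun s : Icc a b => γ s) ⁻¹' Strip x t μ j
      = {s : Icc a b | fq t (γ s) ∈ Icc (μ*(j+x)) (μ*(j+x)+μ)} := by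
  ext s; exact mem_Strip_iff hμ j (γ s)

lemma seg_preconnected (u v : ℝ) :
    IsPreconnected {s : Icc a b | (s:ℝ) ∈ uIcc u v} := by
  have : {s : Icc a b | (s:ℝ) ∈ uIcc u v} = ((↑) : Icc a b → ℝ) ⁻¹' uIcc u v := rfl
  rw [this, ← Topology.IsInducing.subtypeVal.isPreconnected_image]
  rw [Subtype.image_preimage_coe]
  exact ((ordConnected_Icc.inter ordConnected_uIcc)).isPreconnected

lemma uIcc_sub_Icc (hab : a ≤ b) {u v : ℝ} (hu : u ∈ Icc a b) (hv : v ∈ Icc a b) :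
    uIcc u v ⊆ Icc a b := by
  rw [← uIcc_of_le hab]
  exact uIcc_subset_uIcc (by rwa [uIcc_of_le hab]) (by rwa [uIcc_of_le hab])

/-- first crossing of a level along a segment, staying (weakly) below the level. -/
lemma firstCross {g : ℝ → ℝ} (hg : ContinuousOn g (Icc a b)) {u v c : ℝ}
    (hu : u ∈ Icc a b) (hv : v ∈ Icc a b) (hgu : g u ≤ c) (hgv : c ≤ g v) :
    ∃ w ∈ Icc a b, g w = c ∧ ∀ s ∈ uIcc u w, g s ≤ c := by
  rcases le_total u v with h | h
  · set S : Set ℝ := {s | s ∈ Icc u v ∧ c ≤ g s} with hS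
    have hvS : v ∈ S := ⟨⟨h, le_refl v⟩, hgv⟩
    have hsub : Icc u v ⊆ Icc a b := Icc_subset_Icc hu.1 hv.2
    have hSc : IsClosed S := by
      have : S = Icc u v ∩ g ⁻¹' Ici c := by ext s; simp [hS, and_comm]
      rw [this]
      exact ContinuousOn.preimage_isClosed_of_isClosed (hg.mono hsub) isClosed_Icc isClosed_Ici
    have hbdd : BddBelow S := ⟨u, fun s hs => hs.1.1⟩
    set w := sInf S with hw
    have hwS : w ∈ S := hSc.csInf_mem ⟨v, hvS⟩ hbdd
    have hwab : w ∈ Icc a b := hsub hwS.1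
    have huw : u ≤ w := hwS.1.1
    have hgwc : g w = c := by
      rcases eq_or_lt_of_le huw with heq | hult
      · exact le_antisymm (by rw [← heq]; exact hgu) hwS.2
      · by_contra hne
        have hcgw : c < g w := lt_of_le_of_ne hwS.2 (Ne.symm hne)
        obtain ⟨δ, hδ, hδc⟩ := Metric.continuousWithinAt_iff.mp (hg w hwab) (g w - c)
          (by linarith)
        set y := max u (w - δ/2) with hsdef
        have hsw : y < w := by
          apply max_lt hult; linarith
        have hsab : y ∈ Icc a b := ⟨le_trans hu.1 (le_max_left _ _),
          le_trans (le_of_lt hsw) hwab.2⟩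
        have hds : dist y w < δ := by
          rw [Real.dist_eq, abs_of_nonpos (by linarith)]
          have : w - δ/2 ≤ y := le_max_right _ _
          linarith
        have hgs : c < g y := by
          have := hδc hsab hds
          rw [Real.dist_eq, abs_sub_lt_iff] at this
          linarith
        have hsS : y ∈ S := ⟨⟨le_max_left _ _, le_trans (le_of_lt hsw) hwS.1.2⟩, le_of_lt hgs⟩
        exact absurd (csInf_le hbdd hsS) (not_le.2 hsw)
    refine ⟨w, hwab, hgwc, ?_⟩
    intro s hs
    rw [uIcc_of_le huw] at hs
    rcases eq_or_lt_of_le hs.2 with rfl | hslt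
    · exact le_of_eq hgwc
    · by_contra hgt
      push_neg at hgt
      have hsS : s ∈ S := ⟨⟨hs.1, le_trans (le_of_lt hslt) hwS.1.2⟩, le_of_lt hgt⟩
      exact absurd (csInf_le hbdd hsS) (not_le.2 hslt)
  · set S : Set ℝ := {s | s ∈ Icc v u ∧ c ≤ g s} with hS
    have hvS : v ∈ S := ⟨⟨le_refl v, h⟩, hgv⟩
    have hsub : Icc v u ⊆ Icc a b := Icc_subset_Icc hv.1 hu.2
    have hSc : IsClosed S := by
      have : S = Icc v u ∩ g ⁻¹' Ici c := by ext s; simp [hS, and_comm]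
      rw [this]
      exact ContinuousOn.preimage_isClosed_of_isClosed (hg.mono hsub) isClosed_Icc isClosed_Ici
    have hbdd : BddAbove S := ⟨u, fun s hs => hs.1.2⟩
    set w := sSup S with hw
    have hwS : w ∈ S := hSc.csSup_mem ⟨v, hvS⟩ hbdd
    have hwab : w ∈ Icc a b := hsub hwS.1
    have hwu : w ≤ u := hwS.1.2
    have hgwc : g w = c := by
      rcases eq_or_lt_of_le hwu with heq | hult
      · exact le_antisymm (by rw [heq]; exact hgu) hwS.2
      · by_contra hne
        have hcgw : c < g w := lt_of_le_of_ne hwS.2 (Ne.symm hne)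
        obtain ⟨δ, hδ, hδc⟩ := Metric.continuousWithinAt_iff.mp (hg w hwab) (g w - c)
          (by linarith)
        set y := min u (w + δ/2) with hsdef
        have hsw : w < y := by
          apply lt_min hult; linarith
        have hsab : y ∈ Icc a b := ⟨le_trans hwab.1 (le_of_lt hsw),
          le_trans (min_le_left _ _) hu.2⟩
        have hds : dist y w < δ := by
          rw [Real.dist_eq, abs_of_nonneg (by linarith)]
          have : y ≤ w + δ/2 := min_le_right _ _
          linarith
        have hgs : c < g y := by
          have := hδc hsab hds
          rw [Real.dist_eq, abs_sub_lt_iff] at this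
          linarith
        have hsS : y ∈ S := ⟨⟨le_trans hwS.1.1 (le_of_lt hsw), min_le_left _ _⟩, le_of_lt hgs⟩
        exact absurd (le_csSup hbdd hsS) (not_le.2 hsw)
    refine ⟨w, hwab, hgwc, ?_⟩
    intro s hs
    rw [uIcc_of_ge hwu] at hs
    rcases eq_or_lt_of_le hs.1 with rfl | hslt
    · exact le_of_eq hgwc
    · by_contra hgt
      push_neg at hgt
      have hsS : s ∈ S := ⟨⟨le_trans hwS.1.1 (le_of_lt hslt), hs.2⟩, le_of_lt hgt⟩
      exact absurd (le_csSup hbdd hsS) (not_le.2 hslt)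

/-- If a segment `uIcc u v` of the parameter interval maps into the strip `j` and the
values at the endpoints differ, then `Lfn` is at least the value gap. -/
lemma Lfn_ge_gap (hab : a ≤ b) (hγ : ContinuousOn γ (Icc a b)) {x t μ : ℝ} (hμ : 0 < μ)
    (j : ℤ) {u v : ℝ} (hu : u ∈ Icc a b) (hv : v ∈ Icc a b)
    (hseg : ∀ s ∈ uIcc u v, fq t (γ s) ∈ Icc (μ*(j+x)) (μ*(j+x)+μ))
    (hgap : fq t (γ u) < fq t (γ v)) :
    fq t (γ v) - fq t (γ u) ≤ Lfn (fun s : Icc a b => γ s) x t μ := by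
  set γ' : Icc a b → ℂ := fun s : Icc a b => γ s with hγ'
  set pre : Set (Icc a b) := γ' ⁻¹' Strip x t μ j with hpredef
  have hpre : pre = {s : Icc a b | fq t (γ s) ∈ Icc (μ*(j+x)) (μ*(j+x)+μ)} :=
    preimage_Strip hμ j
  set U : Icc a b := ⟨u, hu⟩
  set V : Icc a b := ⟨v, hv⟩
  set seg : Set (Icc a b) := {s : Icc a b | (s:ℝ) ∈ uIcc u v} with hsegdef
  have hsegpre : seg ⊆ pre := by
    intro s hs; rw [hpre]; exact hseg _ hs
  have hUseg : U ∈ seg := by simp [hsegdef]; exact left_mem_uIcc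
  have hVseg : V ∈ seg := by simp [hsegdef]; exact right_mem_uIcc
  have hUpre : U ∈ pre := hsegpre hUseg
  set C : Set (Icc a b) := connectedComponentIn pre U with hCdef
  have hsegC : seg ⊆ C :=
    (seg_preconnected u v).subset_connectedComponentIn hUseg hsegpre
  have hUC : U ∈ C := mem_connectedComponentIn hUpre
  have hVC : V ∈ C := hsegC hVseg
  have hmemu : fq t (γ u) ∈ projPerp t '' (γ' '' C) :=
    ⟨γ' U, ⟨U, hUC, rfl⟩, (projPerp_eq_fq t (γ' U)).trans rfl⟩
  have hmemv : fq t (γ v) ∈ projPerp t '' (γ' '' C) :=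
    ⟨γ' V, ⟨V, hVC, rfl⟩, (projPerp_eq_fq t (γ' V)).trans rfl⟩
  have hC : C ∈ ndComponents γ' x t μ := by
    refine ⟨⟨j, U, hUpre, rfl⟩, ?_⟩
    exact ⟨_, hmemu, _, hmemv, ne_of_lt hgap⟩
  have hbdd : Bornology.IsBounded (projPerp t '' (γ' '' C)) := by
    refine Bornology.IsBounded.subset (Metric.isBounded_Icc (μ*(j+x)) (μ*(j+x)+μ)) ?_
    rintro y ⟨z, ⟨s, hsC, rfl⟩, rfl⟩
    have : s ∈ pre := connectedComponentIn_subset pre U hsC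
    rw [hpre] at this
    rw [projPerp_eq_fq]
    exact this
  have hval : fq t (γ v) - fq t (γ u) ≤ normT t (γ' '' C) := by
    refine le_trans (le_abs_self _) ?_
    rw [← Real.dist_eq]
    exact Metric.dist_le_diam_of_mem hbdd hmemv hmemu
  have hmemSS : normT t (γ' '' C) ∈ SS γ' x t μ := by
    refine ⟨1, fun _ => C, fun n m _ => Subsingleton.elim n m, fun n => hC, ?_⟩
    simp
  calc fq t (γ v) - fq t (γ u) ≤ normT t (γ' '' C) := hval
    _ ≤ Lfn γ' x t μ := le_csSup (bddAbove_SS hγ x t μ) hmemSS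

/-- Pointwise lower bound: `Lfn ≥ D_t/2` whenever the projected diameter is at most `μ`. -/
lemma Lfn_ge_half (hab : a ≤ b) (hγ : ContinuousOn γ (Icc a b)) {x t μ : ℝ} (hμ : 0 < μ)
    (hDμ : Metric.diam (projPerp t '' (γ '' Icc a b)) ≤ μ) :
    Metric.diam (projPerp t '' (γ '' Icc a b)) / 2 ≤ Lfn (fun s : Icc a b => γ s) x t μ := by
  classical
  set g : ℝ → ℝ := fun s => fq t (γ s) with hgdef
  have hgc : ContinuousOn g (Icc a b) := by
    refine ContinuousOn.comp (g := fun z : ℂ => fq t z) ?_ hγ (mapsTo_image γ (Icc a b)) |>.mono ?_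
    · exact (Complex.continuous_im.comp (continuous_mul_right _)).continuousOn
    · exact le_refl _
  have himg : projPerp t '' (γ '' Icc a b) = g '' Icc a b := by
    rw [Set.image_image]
    exact Set.image_congr fun s _ => projPerp_eq_fq t (γ s)
  have hne : (Icc a b).Nonempty := nonempty_Icc.2 hab
  obtain ⟨u, hu, hmin⟩ := isCompact_Icc.exists_isMinOn hne hgc
  obtain ⟨v, hv, hmax⟩ := isCompact_Icc.exists_isMaxOn hne hgc
  set m := g u with hm
  set M := g v with hM
  have hminle : ∀ s ∈ Icc a b, m ≤ g s := fun s hs => hmin hs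
  have hmaxle : ∀ s ∈ Icc a b, g s ≤ M := fun s hs => hmax hs
  set D := Metric.diam (projPerp t '' (γ '' Icc a b)) with hDdef
  have hD : D = M - m := by
    have hmM : m ≤ M := hminle v hv
    apply le_antisymm
    · rw [hDdef, himg]
      refine Metric.diam_le_of_forall_dist_le (by linarith) ?_
      rintro y ⟨s, hs, rfl⟩ y' ⟨s', hs', rfl⟩
      rw [Real.dist_eq, abs_sub_le_iff]
      constructor
      · linarith [hminle s' hs', hmaxle s hs]
      · linarith [hminle s hs, hmaxle s' hs']
    · have hbd : Bornology.IsBounded (g '' Icc a b) :=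
        (isCompact_Icc.image_of_continuousOn hgc).isBounded
      rw [hDdef, himg]
      refine le_trans (le_abs_self _) ?_
      rw [← Real.dist_eq]
      exact Metric.dist_le_diam_of_mem hbd ⟨v, hv, rfl⟩ ⟨u, hu, rfl⟩
  rcases eq_or_lt_of_le (hminle v hv) with heq | hlt
  · rw [hD, show M = m from hM.trans heq.symm]
    simpa using Lfn_nonneg hγ x t μ
  · -- m < M, D > 0
    have hD0 : 0 < D := by rw [hD]; linarith
    set k : ℤ := ⌊m/μ - x⌋ with hk
    set c : ℝ := μ*((k:ℝ) + 1 + x) with hc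
    have hmc : m < c := by
      have h1 : m/μ - x < (k:ℝ) + 1 := Int.lt_floor_add_one _
      have hmd : μ * (m/μ) = m := by field_simp
      have := (mul_lt_mul_iff_right₀ hμ).2 (by linarith : m/μ < (k:ℝ) + 1 + x)
      rwa [hmd] at this
    have hcm : c ≤ m + μ := by
      have h1 : (k:ℝ) + x ≤ m/μ := by
        have := Int.floor_le (m/μ - x)
        linarith
      have hmd : μ * (m/μ + 1) = m + μ := by field_simp
      have := (mul_le_mul_iff_right₀ hμ).2 (by linarith : (k:ℝ) + 1 + x ≤ m/μ + 1)
      rw [hmd] at this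
      linarith
    by_cases hMc : M ≤ c
    · -- the whole range is inside strip k
      have hgap : m < M := hlt
      have hle : D ≤ Lfn (fun s : Icc a b => γ s) x t μ := by
        rw [hD]
        refine Lfn_ge_gap hab hγ hμ k hu hv ?_ hlt
        intro s hs
        have hsab : s ∈ Icc a b := uIcc_sub_Icc hab hu hv hs
        have h1 := hminle s hsab
        have h2 := hmaxle s hsab
        constructor
        · have : μ*((k:ℝ)+x) = c - μ := by rw [hc]; ring
          rw [this]; linarith
        · have : μ*((k:ℝ)+x) + μ = c := by rw [hc]; ring
          rw [this]; linarith
      linarith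
    · push_neg at hMc
      by_cases hhalf : D/2 ≤ c - m
      · -- first upward crossing of level c, starting from the minimum
        obtain ⟨w, hw, hgw, hbelow⟩ :=
          firstCross hgc hu hv (le_of_lt hmc) (le_of_lt hMc)
        have hle : c - m ≤ Lfn (fun s : Icc a b => γ s) x t μ := by
          have := Lfn_ge_gap hab hγ hμ k hu hw (x := x) (t := t) ?_ ?_
          · rw [show fq t (γ w) = c from hgw, show fq t (γ u) = m from hm.symm] at this
            exact this
          · intro s hs
            have hsab : s ∈ Icc a b := uIcc_sub_Icc hab hu hw hs
            constructor
            · have h0 : μ*((k:ℝ)+x) = c - μ := by rw [hc]; ring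
              rw [h0]; linarith [hminle s hsab]
            · have h0 : μ*((k:ℝ)+x) + μ = c := by rw [hc]; ring
              rw [h0]; exact hbelow s hs
          · show g u < g w
            rw [hgw, ← hm]; exact hmc
        linarith
      · push_neg at hhalf
        have hMc2 : D/2 < M - c := by rw [hD] at *; linarith
        obtain ⟨w, hw, hgw, habove⟩ :=
          firstCross (g := fun s => -(g s)) (hgc.neg) hv hu
            (by show -(g v) ≤ -c; simp only [neg_le_neg_iff]; linarith) (by show -c ≤ -(g u); simp only [neg_le_neg_iff]; linarith)
        have hgw' : g w = c := by
          have : -(g w) = -c := hgw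
          linarith
        have hle : M - c ≤ Lfn (fun s : Icc a b => γ s) x t μ := by
          have := Lfn_ge_gap hab hγ hμ (k+1) hw hv (x := x) (t := t) ?_ ?_
          · rw [show fq t (γ v) = M from hM.symm, show fq t (γ w) = c from hgw'] at this
            exact this
          · intro s hs
            have hsab : s ∈ Icc a b := uIcc_sub_Icc hab hw hv hs
            have hss : s ∈ uIcc v w := by rwa [uIcc_comm] at hs
            have h1 : -(g s) ≤ -c := habove s hss
            constructor
            · have h0 : μ*(((k:ℤ)+1:ℤ)+x) = c := by push_cast [hc]; ring
              rw [h0]; linarith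
            · have h0 : μ*(((k:ℤ)+1:ℤ)+x) + μ = c + μ := by push_cast [hc]; ring
              rw [h0]; linarith [hmaxle s hsab]
          · show g w < g v
            rw [hgw', ← hM]; exact hMc
        linarith
end LenAux
namespace LenAux

/-- Certificate entries: `(j, q, sl, sh, al, be)`. -/
abbrev Ent : Type := ℤ × ℚ × ℚ × ℚ × ℚ × ℚ

abbrev eJ (e : Ent) : ℤ := e.1
abbrev eQ (e : Ent) : ℚ := e.2.1
abbrev eSl (e : Ent) : ℚ := e.2.2.1
abbrev eSh (e : Ent) : ℚ := e.2.2.2.1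
abbrev eAl (e : Ent) : ℚ := e.2.2.2.2.1
abbrev eBe (e : Ent) : ℚ := e.2.2.2.2.2

/-- The parameter space `(x, t, μ)`. -/
abbrev W : Type := ℝ × ℝ × ℝ

/-- The condition that the segment `[u,v] ∩ [a,b]` of parameters is mapped into strip `j`. -/
def inStripC (a b : ℝ) (γ : ℝ → ℂ) (j : ℤ) (u v : ℚ) : Set W :=
  {w | ∀ s : ℝ, s ∈ Icc a b ∩ uIcc (u:ℝ) (v:ℝ) →
    fq w.2.1 (γ s) ∈ Icc (w.2.2*(j + w.1)) (w.2.2*(j + w.1) + w.2.2)}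

lemma continuous_fqw (z : ℂ) : Continuous fun w : W => fq w.2.1 z := by
  unfold fq
  apply Complex.continuous_im.comp
  apply continuous_const.mul
  apply Complex.continuous_exp.comp
  apply Continuous.neg
  exact ((Complex.continuous_ofReal.comp (continuous_fst.comp continuous_snd)).mul
    continuous_const).mul continuous_const

lemma continuous_low : Continuous fun w : W => w.2.2 * ((0:ℝ) + w.1) := by fun_prop

lemma isClosed_inStripC (a b : ℝ) (γ : ℝ → ℂ) (j : ℤ) (u v : ℚ) :
    IsClosed (inStripC a b γ j u v) := by
  have : inStripC a b γ j u v = ⋂ (s : ℝ) (_ : s ∈ Icc a b ∩ uIcc (u:ℝ) (v:ℝ)),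
      ({w : W | w.2.2*(j + w.1) ≤ fq w.2.1 (γ s)} ∩
       {w : W | fq w.2.1 (γ s) ≤ w.2.2*(j + w.1) + w.2.2}) := by
    ext w; simp [inStripC, mem_iInter, mem_Icc]
  rw [this]
  refine isClosed_iInter fun s => isClosed_iInter fun _ => IsClosed.inter ?_ ?_
  · exact isClosed_le (by fun_prop) (continuous_fqw (γ s))
  · exact isClosed_le (continuous_fqw (γ s)) (by fun_prop)

/-- The conditions attached to a single certificate entry. -/
def entC (a b : ℝ) (γ : ℝ → ℂ) (E : Ent) : Set W :=
  {w : W | ((eQ E : ℝ) ∈ Icc a b ∧ (eSl E : ℝ) ∈ Icc a b ∧ (eSh E : ℝ) ∈ Icc a b)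
    ∧ ((eAl E : ℝ) < (eBe E : ℝ))} ∩
  inStripC a b γ (eJ E) (eQ E) (eSl E) ∩
  inStripC a b γ (eJ E) (eQ E) (eSh E) ∩
  ({w : W | fq w.2.1 (γ (eSl E)) ≤ (eAl E : ℝ)} ∩
   {w : W | (eBe E : ℝ) ≤ fq w.2.1 (γ (eSh E))})

lemma measurable_entC (a b : ℝ) (γ : ℝ → ℂ) (E : Ent) : MeasurableSet (entC a b γ E) := by
  refine MeasurableSet.inter (MeasurableSet.inter (MeasurableSet.inter ?_ ?_) ?_) ?_
  · exact MeasurableSet.const _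
  · exact (isClosed_inStripC a b γ _ _ _).measurableSet
  · exact (isClosed_inStripC a b γ _ _ _).measurableSet
  · exact ((isClosed_le (continuous_fqw _) continuous_const).measurableSet).inter
      ((isClosed_le continuous_const (continuous_fqw _)).measurableSet)

/-- Separation condition for a pair of entries with the same strip index. -/
def pairC (a b : ℝ) (γ : ℝ → ℂ) (L : List Ent) (n m : ℕ) : Set W :=
  if eJ (L.getD n default) = eJ (L.getD m default) ∧ n ≠ m
  then (inStripC a b γ (eJ (L.getD n default)) (eQ (L.getD n default)) (eQ (L.getD m default)))ᶜ
  else univ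

lemma measurable_pairC (a b : ℝ) (γ : ℝ → ℂ) (L : List Ent) (n m : ℕ) :
    MeasurableSet (pairC a b γ L n m) := by
  unfold pairC
  split
  · exact (isClosed_inStripC a b γ _ _ _).measurableSet.compl
  · exact MeasurableSet.univ

/-- All conditions of a certificate. -/
def condC (a b : ℝ) (γ : ℝ → ℂ) (L : List Ent) : Set W :=
  (⋂ n ∈ Finset.range L.length, entC a b γ (L.getD n default)) ∩
  (⋂ n ∈ Finset.range L.length, ⋂ m ∈ Finset.range L.length, pairC a b γ L n m)

lemma measurable_condC (a b : ℝ) (γ : ℝ → ℂ) (L : List Ent) :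
    MeasurableSet (condC a b γ L) := by
  refine MeasurableSet.inter ?_ ?_
  · exact MeasurableSet.biInter (Set.to_countable _) fun n _ => measurable_entC a b γ _
  · exact MeasurableSet.biInter (Set.to_countable _) fun n _ =>
      MeasurableSet.biInter (Set.to_countable _) fun m _ => measurable_pairC a b γ L n m

/-- The value of a certificate. -/
def valC (L : List Ent) : ℝ :=
  ∑ n ∈ Finset.range L.length,
    ((eBe (L.getD n default) : ℝ) - (eAl (L.getD n default) : ℝ)) / 2^n

/-- The piecewise-constant lower approximation attached to a certificate. -/
def GG (a b : ℝ) (γ : ℝ → ℂ) (L : List Ent) : W → ℝ :=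
  (condC a b γ L).indicator (fun _ => valC L)

lemma measurable_GG (a b : ℝ) (γ : ℝ → ℂ) (L : List Ent) : Measurable (GG a b γ L) :=
  (measurable_const.indicator (measurable_condC a b γ L))

/-- The measurable version of `Lfn` (they agree for `μ > 0`). -/
def Phi (a b : ℝ) (γ : ℝ → ℂ) : W → ℝ :=
  fun w => (⨆ L : List Ent, ENNReal.ofReal (GG a b γ L w)).toReal

lemma measurable_Phi (a b : ℝ) (γ : ℝ → ℂ) : Measurable (Phi a b γ) := by
  apply Measurable.ennreal_toReal
  exact Measurable.iSup fun L => (measurable_GG a b γ L).ennreal_ofReal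

end LenAux
namespace LenAux

variable {a b : ℝ} {γ : ℝ → ℂ}

lemma GG_le_Lfn (hab : a ≤ b) (hγ : ContinuousOn γ (Icc a b)) (L : List Ent)
    {x t μ : ℝ} (hμ : 0 < μ) :
    GG a b γ L (x, t, μ) ≤ Lfn (fun s : Icc a b => γ s) x t μ := by
  classical
  unfold GG
  by_cases hw : (x,t,μ) ∈ condC a b γ L
  swap
  · rw [indicator_of_notMem hw]; exact Lfn_nonneg hγ x t μ
  rw [indicator_of_mem hw]
  obtain ⟨hent', hpair'⟩ := hw
  simp only [mem_iInter, Finset.mem_range] at hent' hpair'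
  set γ' : Icc a b → ℂ := fun s : Icc a b => γ s with hγ'
  set N := L.length with hN
  set En : ℕ → Ent := fun n => L.getD n default with hEn
  have hent : ∀ n : Fin N, (x,t,μ) ∈ entC a b γ (En n) := fun n => hent' n n.2
  have hq : ∀ n : Fin N, ((eQ (En n) : ℝ)) ∈ Icc a b := fun n => (hent n).1.1.1.1.1
  have halbe : ∀ n : Fin N, ((eAl (En n) : ℝ)) < ((eBe (En n) : ℝ)) := fun n =>
    (hent n).1.1.1.2
  have hqpre : ∀ n : Fin N,
      (⟨(eQ (En n) : ℝ), hq n⟩ : Icc a b) ∈ γ' ⁻¹' Strip x t μ (eJ (En n)) := by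
    intro n
    rw [hγ', preimage_Strip hμ]
    exact (hent n).1.1.2 (eQ (En n) : ℝ) ⟨hq n, left_mem_uIcc⟩
  set e : Fin N → Set (Icc a b) := fun n =>
    connectedComponentIn (γ' ⁻¹' Strip x t μ (eJ (En n))) ⟨(eQ (En n) : ℝ), hq n⟩ with he
  have hqmem : ∀ n : Fin N, (⟨(eQ (En n) : ℝ), hq n⟩ : Icc a b) ∈ e n :=
    fun n => mem_connectedComponentIn (hqpre n)
  have hsub : ∀ n : Fin N, e n ⊆ γ' ⁻¹' Strip x t μ (eJ (En n)) :=
    fun n => connectedComponentIn_subset _ _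
  have himg : ∀ n : Fin N, projPerp t '' (γ' '' e n)
      ⊆ Icc (μ*((eJ (En n)) + x)) (μ*((eJ (En n)) + x) + μ) := by
    rintro n y ⟨z, ⟨s, hsC, rfl⟩, rfl⟩
    have hsp := hsub n hsC
    rw [hγ', preimage_Strip hμ] at hsp
    rw [projPerp_eq_fq]
    exact hsp
  have hslmem : ∀ n : Fin N, ∃ y ∈ projPerp t '' (γ' '' e n), y ≤ (eAl (En n) : ℝ) := by
    intro n
    have hslIcc : ((eSl (En n) : ℝ)) ∈ Icc a b := (hent n).1.1.1.1.2.1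
    have hsC : (⟨(eSl (En n) : ℝ), hslIcc⟩ : Icc a b) ∈ e n := by
      refine (seg_preconnected (a := a) (b := b) (eQ (En n) : ℝ)
          (eSl (En n) : ℝ)).subset_connectedComponentIn
        (by simpa using left_mem_uIcc) ?_ (by simpa using right_mem_uIcc)
      intro s' hs'
      rw [hγ', preimage_Strip hμ]
      exact (hent n).1.1.2 s'.1 ⟨s'.2, hs'⟩
    exact ⟨fq t (γ (eSl (En n) : ℝ)),
      ⟨γ' ⟨(eSl (En n) : ℝ), hslIcc⟩, ⟨_, hsC, rfl⟩, projPerp_eq_fq t _⟩, (hent n).2.1⟩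
  have hshmem : ∀ n : Fin N, ∃ y ∈ projPerp t '' (γ' '' e n), (eBe (En n) : ℝ) ≤ y := by
    intro n
    have hshIcc : ((eSh (En n) : ℝ)) ∈ Icc a b := (hent n).1.1.1.1.2.2
    have hsC : (⟨(eSh (En n) : ℝ), hshIcc⟩ : Icc a b) ∈ e n := by
      refine (seg_preconnected (a := a) (b := b) (eQ (En n) : ℝ)
          (eSh (En n) : ℝ)).subset_connectedComponentIn
        (by simpa using left_mem_uIcc) ?_ (by simpa using right_mem_uIcc)
      intro s' hs'
      rw [hγ', preimage_Strip hμ]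
      exact (hent n).1.2 s'.1 ⟨s'.2, hs'⟩
    exact ⟨fq t (γ (eSh (En n) : ℝ)),
      ⟨γ' ⟨(eSh (En n) : ℝ), hshIcc⟩, ⟨_, hsC, rfl⟩, projPerp_eq_fq t _⟩, (hent n).2.2⟩
  have hnd : ∀ n : Fin N, e n ∈ ndComponents γ' x t μ := by
    intro n
    obtain ⟨y1, hy1, hy1le⟩ := hslmem n
    obtain ⟨y2, hy2, hy2ge⟩ := hshmem n
    refine ⟨⟨eJ (En n), _, hqpre n, rfl⟩, ⟨y1, hy1, y2, hy2, ?_⟩⟩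
    have := halbe n
    exact ne_of_lt (by linarith)
  have hbdd : ∀ n : Fin N, Bornology.IsBounded (projPerp t '' (γ' '' e n)) := fun n =>
    (Metric.isBounded_Icc _ _).subset (himg n)
  have hval : ∀ n : Fin N, (eBe (En n) : ℝ) - (eAl (En n) : ℝ) ≤ normT t (γ' '' e n) := by
    intro n
    obtain ⟨y1, hy1, hy1le⟩ := hslmem n
    obtain ⟨y2, hy2, hy2ge⟩ := hshmem n
    calc (eBe (En n) : ℝ) - (eAl (En n) : ℝ) ≤ y2 - y1 := by linarith
      _ ≤ |y2 - y1| := le_abs_self _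
      _ ≤ normT t (γ' '' e n) := by
          rw [← Real.dist_eq]
          exact Metric.dist_le_diam_of_mem (hbdd n) hy2 hy1
  have hinj : Function.Injective e := by
    intro n m hnm
    by_contra hne
    rcases eq_or_ne (eJ (En n)) (eJ (En m)) with hj | hj
    · have hp := hpair' n n.2 m m.2
      rw [pairC, if_pos ⟨hj, fun h => hne (Fin.ext h)⟩] at hp
      apply hp
      intro s hs
      have hqm_in_en : (⟨(eQ (En m) : ℝ), hq m⟩ : Icc a b) ∈ e n := by
        rw [hnm]; exact hqmem m
      have hpc : IsPreconnected (Subtype.val '' e n) :=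
        (isPreconnected_connectedComponentIn).image _ continuous_subtype_val.continuousOn
      have huIcc : uIcc (eQ (En n) : ℝ) (eQ (En m) : ℝ) ⊆ Subtype.val '' e n :=
        hpc.ordConnected.uIcc_subset ⟨_, hqmem n, rfl⟩ ⟨_, hqm_in_en, rfl⟩
      obtain ⟨s', hs'en, rfl⟩ := huIcc hs.2
      have hsp := hsub n hs'en
      rw [hγ', preimage_Strip hμ] at hsp
      exact hsp
    · obtain ⟨y1, hy1, hy1le⟩ := hslmem n
      obtain ⟨y2, hy2, hy2ge⟩ := hshmem n
      have h2n := himg n hy2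
      have h1m := himg m (by rw [← hnm]; exact hy1)
      have h2m := himg m (by rw [← hnm]; exact hy2)
      have h1n := himg n hy1
      have hab' := halbe n
      rcases lt_or_gt_of_ne hj with hlt | hlt
      · have hcast : ((eJ (En n) : ℝ)) + 1 ≤ ((eJ (En m) : ℝ)) := by
          exact_mod_cast Int.add_one_le_iff.mpr hlt
        have hsep : μ*((eJ (En n)) + x) + μ ≤ μ*((eJ (En m)) + x) := by
          have := mul_le_mul_of_nonneg_left
            (show ((eJ (En n) : ℝ)) + x + 1 ≤ ((eJ (En m) : ℝ)) + x by linarith) hμ.le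
          linarith [this]
        linarith [h2n.2, h1m.1, hsep, hy1le, hy2ge, hab']
      · have hcast : ((eJ (En m) : ℝ)) + 1 ≤ ((eJ (En n) : ℝ)) := by
          exact_mod_cast Int.add_one_le_iff.mpr hlt
        have hsep : μ*((eJ (En m)) + x) + μ ≤ μ*((eJ (En n)) + x) := by
          have := mul_le_mul_of_nonneg_left
            (show ((eJ (En m) : ℝ)) + x + 1 ≤ ((eJ (En n) : ℝ)) + x by linarith) hμ.le
          linarith [this]
        linarith [h2m.2, h1n.1, hsep, hy1le, hy2ge, hab']
  have hmemSS : (∑ n : Fin N, normT t (γ' '' e n) / (2:ℝ)^(n:ℕ)) ∈ SS γ' x t μ :=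
    ⟨N, e, hinj, hnd, rfl⟩
  have hle : valC L ≤ ∑ n : Fin N, normT t (γ' '' e n) / (2:ℝ)^(n:ℕ) := by
    rw [valC, ← hN,
      ← Fin.sum_univ_eq_sum_range
        (fun n => (((eBe (L.getD n default) : ℝ)) - ((eAl (L.getD n default) : ℝ)))/2^n) N]
    refine Finset.sum_le_sum fun n _ => ?_
    gcongr
    exact hval n
  exact le_trans hle (le_csSup (bddAbove_SS hγ x t μ) hmemSS)

end LenAux
namespace LenAux

variable {a b : ℝ} {γ : ℝ → ℂ}

lemma contOn_fq (hγ : ContinuousOn γ (Icc a b)) (t : ℝ) :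
    ContinuousOn (fun s => fq t (γ s)) (Icc a b) := by
  refine ContinuousOn.comp (g := fun z : ℂ => fq t z) ?_ hγ (mapsTo_image γ (Icc a b)) |>.mono
    (le_refl _)
  exact (Complex.continuous_im.comp (continuous_mul_right _)).continuousOn

lemma rat_near {u v : ℝ} (huv : u ≠ v) {δ : ℝ} (hδ : 0 < δ) :
    ∃ q : ℚ, (q:ℝ) ∈ uIcc u v ∧ |(q:ℝ) - u| < δ := by
  rcases lt_or_gt_of_ne huv with h | h
  · obtain ⟨q, hq1, hq2⟩ := exists_rat_btwn (lt_min h (by linarith : u < u + δ))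
    refine ⟨q, ?_, ?_⟩
    · rw [uIcc_of_le h.le]
      exact ⟨hq1.le, le_trans hq2.le (min_le_left _ _)⟩
    · rw [abs_of_nonneg (by linarith)]
      have := lt_of_lt_of_le hq2 (min_le_right _ _)
      linarith
  · obtain ⟨q, hq1, hq2⟩ := exists_rat_btwn (max_lt h (by linarith : u - δ < u))
    refine ⟨q, ?_, ?_⟩
    · rw [uIcc_of_ge h.le]
      exact ⟨le_trans (le_max_left _ _) hq1.le, hq2.le⟩
    · rw [abs_of_nonpos (by linarith)]
      have := lt_of_le_of_lt (le_max_right _ _) hq1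
      linarith

lemma exists_gap_pair {A : Set ℝ} (hA : Bornology.IsBounded A) (hnt : A.Nontrivial)
    {ε : ℝ} (hε : 0 < ε) :
    ∃ y1 ∈ A, ∃ y2 ∈ A, y1 < y2 ∧ Metric.diam A - ε ≤ y2 - y1 := by
  by_cases h : Metric.diam A ≤ ε
  · obtain ⟨z1, h1, z2, h2, hne⟩ := hnt
    rcases lt_or_gt_of_ne hne with hlt | hlt
    · exact ⟨z1, h1, z2, h2, hlt, by linarith⟩
    · exact ⟨z2, h2, z1, h1, hlt, by linarith⟩
  · push_neg at h
    by_contra hcon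
    push_neg at hcon
    have hd : Metric.diam A ≤ Metric.diam A - ε := by
      refine Metric.diam_le_of_forall_dist_le (by linarith) ?_
      intro y1 hy1 y2 hy2
      rcases lt_trichotomy y1 y2 with hlt | heq | hlt
      · have := hcon y1 hy1 y2 hy2 hlt
        rw [Real.dist_eq, abs_of_nonpos (by linarith)]
        linarith
      · rw [heq, dist_self]; linarith
      · have := hcon y2 hy2 y1 hy1 hlt
        rw [Real.dist_eq, abs_of_nonneg (by linarith)]
        linarith
    linarith

lemma exists_cert_entry (hab : a ≤ b) (hγ : ContinuousOn γ (Icc a b))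
    {x t μ : ℝ} (hμ : 0 < μ) (j : ℤ) (p : Icc a b) (C : Set (Icc a b))
    (hppre : p ∈ (fun s : Icc a b => γ s) ⁻¹' Strip x t μ j)
    (hCeq : C = connectedComponentIn ((fun s : Icc a b => γ s) ⁻¹' Strip x t μ j) p)
    (hnt : (projPerp t '' ((fun s : Icc a b => γ s) '' C)).Nontrivial)
    {ε : ℝ} (hε : 0 < ε) :
    ∃ (q sl sh al be : ℚ) (hqI : (q:ℝ) ∈ Icc a b),
      (x,t,μ) ∈ entC a b γ (j, q, sl, sh, al, be) ∧
      (⟨(q:ℝ), hqI⟩ : Icc a b) ∈ C ∧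
      normT t ((fun s : Icc a b => γ s) '' C) - ε ≤ (be:ℝ) - (al:ℝ) := by
  classical
  set γ' : Icc a b → ℂ := fun s : Icc a b => γ s with hγ'
  set A := projPerp t '' (γ' '' C) with hA
  have hCsub : C ⊆ γ' ⁻¹' Strip x t μ j := by
    rw [hCeq]; exact connectedComponentIn_subset _ _
  have hAsub : A ⊆ Icc (μ*(j + x)) (μ*(j + x) + μ) := by
    rintro y ⟨z, ⟨s, hsC, rfl⟩, rfl⟩
    have hsp := hCsub hsC
    rw [hγ', preimage_Strip hμ] at hsp
    rw [projPerp_eq_fq]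
    exact hsp
  have hAbd : Bornology.IsBounded A := (Metric.isBounded_Icc _ _).subset hAsub
  obtain ⟨y1, hy1, y2, hy2, hylt, hygap⟩ := exists_gap_pair hAbd hnt (half_pos hε)
  set δ := min (ε/4) ((y2 - y1)/3) with hδdef
  have hδ : 0 < δ := lt_min (by linarith) (by linarith)
  obtain ⟨al, hal1, hal2⟩ := exists_rat_btwn (show y1 < y1 + δ by linarith)
  obtain ⟨be, hbe1, hbe2⟩ := exists_rat_btwn (show y2 - δ < y2 by linarith)
  have hδ3 : δ ≤ (y2 - y1)/3 := min_le_right _ _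
  have hδ4 : δ ≤ ε/4 := min_le_left _ _
  have hal_be : (al:ℝ) < be := by linarith
  have hbe_al : Metric.diam A - ε ≤ (be:ℝ) - al := by linarith
  -- witnesses
  obtain ⟨z1, ⟨s1, hs1C, rfl⟩, rfl⟩ := hy1
  obtain ⟨z2, ⟨s2, hs2C, rfl⟩, rfl⟩ := hy2
  have hsne : (s1 : ℝ) ≠ (s2 : ℝ) := by
    intro h
    exact absurd (congrArg (fun s => projPerp t (γ' s)) (Subtype.ext h : s1 = s2))
      (ne_of_lt hylt)
  have hpc : IsPreconnected (Subtype.val '' C) := by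
    rw [hCeq]
    exact (isPreconnected_connectedComponentIn).image _ continuous_subtype_val.continuousOn
  have huIccC : ∀ s ∈ uIcc (s1:ℝ) (s2:ℝ), ∃ hs : s ∈ Icc a b, (⟨s, hs⟩ : Icc a b) ∈ C := by
    intro s hs
    have hsubI : uIcc (s1:ℝ) (s2:ℝ) ⊆ Subtype.val '' C :=
      hpc.ordConnected.uIcc_subset ⟨s1, hs1C, rfl⟩ ⟨s2, hs2C, rfl⟩
    obtain ⟨s', hs', rfl⟩ := hsubI hs
    exact ⟨s'.2, by simpa using hs'⟩
  set gR : ℝ → ℝ := fun s => fq t (γ s) with hgR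
  have hgRc : ContinuousOn gR (Icc a b) := contOn_fq hγ t
  have hv1 : gR (s1:ℝ) = projPerp t (γ' s1) := (projPerp_eq_fq t _).symm
  have hv2 : gR (s2:ℝ) = projPerp t (γ' s2) := (projPerp_eq_fq t _).symm
  -- rational witness below al, near s1
  obtain ⟨δ1, hδ1, hδ1c⟩ := Metric.continuousWithinAt_iff.mp (hgRc (s1:ℝ) s1.2)
    ((al:ℝ) - projPerp t (γ' s1)) (by linarith)
  obtain ⟨sl, hslI, hsld⟩ := rat_near hsne hδ1
  obtain ⟨hslab, hslC⟩ := huIccC (sl:ℝ) hslI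
  have hgsl : gR (sl:ℝ) < al := by
    have := hδ1c hslab (by rwa [Real.dist_eq])
    rw [Real.dist_eq, hv1, abs_sub_lt_iff] at this
    linarith
  -- rational witness above be, near s2
  have hsne' : (s2 : ℝ) ≠ (s1 : ℝ) := fun h => hsne h.symm
  obtain ⟨δ2, hδ2, hδ2c⟩ := Metric.continuousWithinAt_iff.mp (hgRc (s2:ℝ) s2.2)
    (projPerp t (γ' s2) - (be:ℝ)) (by linarith)
  obtain ⟨sh, hshI', hshd⟩ := rat_near hsne' hδ2
  have hshI : (sh:ℝ) ∈ uIcc (s1:ℝ) (s2:ℝ) := by rwa [uIcc_comm] at hshI'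
  obtain ⟨hshab, hshC⟩ := huIccC (sh:ℝ) hshI
  have hgsh : (be:ℝ) < gR (sh:ℝ) := by
    have := hδ2c hshab (by rwa [Real.dist_eq])
    rw [Real.dist_eq, hv2, abs_sub_lt_iff] at this
    linarith
  -- the in-strip condition for segments between points of `uIcc s1 s2`
  have hseg : ∀ (u v : ℚ), (u:ℝ) ∈ uIcc (s1:ℝ) (s2:ℝ) → (v:ℝ) ∈ uIcc (s1:ℝ) (s2:ℝ) →
      (x,t,μ) ∈ inStripC a b γ j u v := by
    intro u v hu hv s hs
    have hsI : s ∈ uIcc (s1:ℝ) (s2:ℝ) := uIcc_subset_uIcc hu hv hs.2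
    obtain ⟨hsab', hsC'⟩ := huIccC s hsI
    have := hCsub hsC'
    rw [hγ', preimage_Strip hμ] at this
    exact this
  exact ⟨sl, sl, sh, al, be, hslab, ⟨⟨⟨⟨⟨hslab, hslab, hshab⟩, hal_be⟩,
    hseg sl sl hslI hslI⟩, hseg sl sh hslI hshI⟩, le_of_lt hgsl, le_of_lt hgsh⟩,
    hslC, hbe_al⟩

end LenAux
namespace LenAux

variable {a b : ℝ} {γ : ℝ → ℂ}

lemma exists_cert (hab : a ≤ b) (hγ : ContinuousOn γ (Icc a b))
    {x t μ : ℝ} (hμ : 0 < μ) {r ε : ℝ}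
    (hr : r ∈ SS (fun s : Icc a b => γ s) x t μ) (hε : 0 < ε) :
    ∃ L : List Ent, (x,t,μ) ∈ condC a b γ L ∧ r - ε ≤ valC L := by
  classical
  set γ' : Icc a b → ℂ := fun s : Icc a b => γ s with hγ'
  obtain ⟨N, e, hinj, hnd, rfl⟩ := hr
  have hstrip : ∀ n : Fin N, ∃ (j : ℤ) (p : Icc a b),
      p ∈ γ' ⁻¹' Strip x t μ j ∧ e n = connectedComponentIn (γ' ⁻¹' Strip x t μ j) p := by
    intro n
    obtain ⟨j, p, hp, hC⟩ := (hnd n).1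
    exact ⟨j, p, hp, hC⟩
  choose j p hppre hCeq using hstrip
  have hcert : ∀ n : Fin N, ∃ (q sl sh al be : ℚ) (hqI : (q:ℝ) ∈ Icc a b),
      (x,t,μ) ∈ entC a b γ (j n, q, sl, sh, al, be) ∧
      (⟨(q:ℝ), hqI⟩ : Icc a b) ∈ e n ∧
      normT t (γ' '' e n) - ε/2 ≤ (be:ℝ) - (al:ℝ) := fun n =>
    exists_cert_entry hab hγ hμ (j n) (p n) (e n) (hppre n) (hCeq n) (hnd n).2 (half_pos hε)
  choose q sl sh al be hqI hent hqC hgap using hcert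
  set L : List Ent := List.ofFn (fun n : Fin N => ((j n, q n, sl n, sh n, al n, be n) : Ent))
    with hL
  have hlen : L.length = N := by rw [hL, List.length_ofFn]
  have hgetD : ∀ (k : ℕ) (hk : k < N),
      L.getD k default = (j ⟨k, hk⟩, q ⟨k, hk⟩, sl ⟨k, hk⟩, sh ⟨k, hk⟩, al ⟨k, hk⟩, be ⟨k, hk⟩) := by
    intro k hk
    rw [List.getD_eq_getElem L default (by rw [hlen]; exact hk)]
    simp [hL, List.getElem_ofFn]
  have hcond : (x,t,μ) ∈ condC a b γ L := by
    constructor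
    · simp only [mem_iInter, Finset.mem_range, hlen]
      intro n hn
      rw [hgetD n hn]
      exact hent ⟨n, hn⟩
    · simp only [mem_iInter, Finset.mem_range, hlen]
      intro n hn m hm
      rw [pairC]
      split
      case isTrue h =>
        rw [hgetD n hn, hgetD m hm] at h
        obtain ⟨hjeq0, hnem⟩ := h
        set nn : Fin N := ⟨n, hn⟩
        set mm : Fin N := ⟨m, hm⟩
        have hjeq : j nn = j mm := hjeq0
        intro hin
        rw [hgetD n hn, hgetD m hm] at hin
        exfalso
        have hqn_mem : (⟨(q nn : ℝ), hqI nn⟩ : Icc a b) ∈ e nn := hqC nn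
        have hqm_mem : (⟨(q mm : ℝ), hqI mm⟩ : Icc a b) ∈ e mm := hqC mm
        have h1 : e nn = connectedComponentIn (γ' ⁻¹' Strip x t μ (j nn))
            ⟨(q nn : ℝ), hqI nn⟩ := by
          rw [hCeq nn]
          exact connectedComponentIn_eq (by rw [← hCeq nn]; exact hqn_mem)
        have h2 : e mm = connectedComponentIn (γ' ⁻¹' Strip x t μ (j nn))
            ⟨(q mm : ℝ), hqI mm⟩ := by
          have := hCeq mm
          rw [← hjeq] at this
          rw [this]
          exact connectedComponentIn_eq (by rw [← this]; exact hqm_mem)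
        have hqm_in : (⟨(q mm : ℝ), hqI mm⟩ : Icc a b)
            ∈ connectedComponentIn (γ' ⁻¹' Strip x t μ (j nn)) ⟨(q nn : ℝ), hqI nn⟩ := by
          refine (seg_preconnected (a := a) (b := b) (q nn : ℝ)
              (q mm : ℝ)).subset_connectedComponentIn
            (by simpa using left_mem_uIcc) ?_ (by simpa using right_mem_uIcc)
          intro s' hs'
          rw [hγ', preimage_Strip hμ]
          exact hin s'.1 ⟨s'.2, hs'⟩
        have : e nn = e mm := by
          rw [h1, h2, connectedComponentIn_eq hqm_in]
        exact hnem (by simpa using congrArg Fin.val (hinj this))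
      case isFalse h => trivial
  refine ⟨L, hcond, ?_⟩
  have hvalC : valC L = ∑ n : Fin N, ((be n : ℝ) - (al n : ℝ)) / 2^(n:ℕ) := by
    rw [valC, hlen, ← Fin.sum_univ_eq_sum_range
      (fun k => (((eBe (L.getD k default) : ℝ)) - ((eAl (L.getD k default) : ℝ)))/2^k) N]
    refine Finset.sum_congr rfl fun n _ => ?_
    rw [hgetD n.1 n.2]
  rw [hvalC]
  have hsum : ∑ n : Fin N, normT t (γ' '' e n) / (2:ℝ)^(n:ℕ)
      - ∑ n : Fin N, ((be n : ℝ) - (al n : ℝ)) / 2^(n:ℕ) ≤ ε := by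
    rw [← Finset.sum_sub_distrib]
    calc ∑ n : Fin N, (normT t (γ' '' e n) / (2:ℝ)^(n:ℕ) - ((be n : ℝ) - (al n : ℝ)) / 2^(n:ℕ))
        ≤ ∑ n : Fin N, (ε/2) * (1/2)^(n:ℕ) := by
          refine Finset.sum_le_sum fun n _ => ?_
          rw [div_sub_div_same]
          rw [one_div, inv_pow, ← div_eq_mul_inv]
          have := hgap n
          have h2 : (0:ℝ) < 2^(n:ℕ) := by positivity
          rw [div_le_div_iff₀ h2 h2]
          nlinarith [hgap n]
      _ = (ε/2) * ∑ n : Fin N, (1/(2:ℝ))^(n:ℕ) := by rw [Finset.mul_sum]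
      _ ≤ (ε/2) * 2 := by
          refine mul_le_mul_of_nonneg_left ?_ (by linarith)
          rw [Fin.sum_univ_eq_sum_range]
          exact sum_geometric_two_le N
      _ = ε := by ring
  linarith

lemma GG_nonneg (L : List Ent) (w : W) : 0 ≤ GG a b γ L w := by
  classical
  refine Set.indicator_nonneg (fun y hy => ?_) w
  obtain ⟨h1, -⟩ := hy
  simp only [mem_iInter, Finset.mem_range] at h1
  refine Finset.sum_nonneg fun n hn => ?_
  have := (h1 n (Finset.mem_range.mp hn)).1.1.1.2
  exact div_nonneg (by linarith) (by positivity)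

lemma GG_eq_zero_of_nonpos (L : List Ent) {w : W} (hw : w.2.2 ≤ 0) : GG a b γ L w = 0 := by
  classical
  rcases Nat.eq_zero_or_pos L.length with h0 | h0
  · have : valC L = 0 := by simp [valC, h0]
    simp [GG, this, Set.indicator_apply]
  · by_cases hmem : w ∈ condC a b γ L
    · exfalso
      obtain ⟨h1, -⟩ := hmem
      simp only [mem_iInter, Finset.mem_range] at h1
      have hE := h1 0 h0
      obtain ⟨⟨⟨⟨hqI, hslI, hshI⟩, halbe⟩, hstrip1⟩, hstrip2⟩ := hE.1
      obtain ⟨hval1, hval2⟩ := hE.2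
      simp only [mem_setOf_eq] at hval1 hval2
      have hsl := hstrip1 _ ⟨hslI, right_mem_uIcc⟩
      have hsh := hstrip2 _ ⟨hshI, right_mem_uIcc⟩
      have := hsl.1; have := hsl.2; have := hsh.1; have := hsh.2
      linarith [hsl.1, hsl.2, hsh.1, hsh.2, hval1, hval2, halbe]
    · simp [GG, Set.indicator_of_notMem hmem]

lemma GG_le (hab : a ≤ b) (hγ : ContinuousOn γ (Icc a b)) (L : List Ent) (w : W) :
    GG a b γ L w ≤ 2 * Metric.diam (γ '' Icc a b) := by
  rcases le_or_gt w.2.2 0 with hw | hw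
  · rw [GG_eq_zero_of_nonpos L hw]
    positivity
  · have := GG_le_Lfn hab hγ L (x := w.1) (t := w.2.1) hw
    calc GG a b γ L w = GG a b γ L (w.1, w.2.1, w.2.2) := by rfl
      _ ≤ Lfn (fun s : Icc a b => γ s) w.1 w.2.1 w.2.2 := this
      _ ≤ 2 * Metric.diam (γ '' Icc a b) := Lfn_le hγ _ _ _

lemma iSup_GG_ne_top (hab : a ≤ b) (hγ : ContinuousOn γ (Icc a b)) (w : W) :
    (⨆ L : List Ent, ENNReal.ofReal (GG a b γ L w)) ≠ ⊤ := by
  refine ne_top_of_le_ne_top (b := ENNReal.ofReal (2 * Metric.diam (γ '' Icc a b)))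
    ENNReal.ofReal_ne_top ?_
  exact iSup_le fun L => ENNReal.ofReal_le_ofReal (GG_le hab hγ L w)

lemma Phi_nonneg (w : W) : 0 ≤ Phi a b γ w := ENNReal.toReal_nonneg

lemma Phi_le (hab : a ≤ b) (hγ : ContinuousOn γ (Icc a b)) (w : W) :
    Phi a b γ w ≤ 2 * Metric.diam (γ '' Icc a b) := by
  unfold Phi
  calc (⨆ L : List Ent, ENNReal.ofReal (GG a b γ L w)).toReal
      ≤ (ENNReal.ofReal (2 * Metric.diam (γ '' Icc a b))).toReal := by
        refine ENNReal.toReal_mono ENNReal.ofReal_ne_top ?_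
        exact iSup_le fun L => ENNReal.ofReal_le_ofReal (GG_le hab hγ L w)
    _ = 2 * Metric.diam (γ '' Icc a b) := ENNReal.toReal_ofReal (by positivity)

lemma Lfn_eq_Phi (hab : a ≤ b) (hγ : ContinuousOn γ (Icc a b)) {x t μ : ℝ} (hμ : 0 < μ) :
    Lfn (fun s : Icc a b => γ s) x t μ = Phi a b γ (x, t, μ) := by
  set γ' : Icc a b → ℂ := fun s : Icc a b => γ s with hγ'
  have hne : ((x,t,μ) : W).2.2 = μ := rfl
  apply le_antisymm
  · refine le_of_forall_pos_le_add fun ε hε => ?_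
    have hlt : Lfn γ' x t μ - ε/2 < sSup (SS γ' x t μ) := by
      have := Lfn_nonneg hγ x t μ
      rw [Lfn_eq_sSup_SS] at this ⊢
      linarith
    obtain ⟨r, hrSS, hrgt⟩ := exists_lt_of_lt_csSup ⟨0, zero_mem_SS γ' x t μ⟩ hlt
    obtain ⟨L, hcond, hval⟩ := exists_cert hab hγ hμ hrSS (half_pos hε)
    have hGG : GG a b γ L (x,t,μ) = valC L := by
      rw [GG, Set.indicator_of_mem hcond]
    have hle : valC L ≤ Phi a b γ (x,t,μ) := by
      rw [← hGG]
      unfold Phi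
      rw [show GG a b γ L (x,t,μ)
          = (ENNReal.ofReal (GG a b γ L (x,t,μ))).toReal from
        (ENNReal.toReal_ofReal (GG_nonneg L _)).symm]
      exact ENNReal.toReal_mono (iSup_GG_ne_top hab hγ _) (le_iSup (fun L => ENNReal.ofReal (GG a b γ L ((x,t,μ) : W))) L)
    linarith
  · unfold Phi
    calc (⨆ L : List Ent, ENNReal.ofReal (GG a b γ L (x,t,μ))).toReal
        ≤ (ENNReal.ofReal (Lfn γ' x t μ)).toReal := by
          refine ENNReal.toReal_mono ENNReal.ofReal_ne_top ?_
          exact iSup_le fun L => ENNReal.ofReal_le_ofReal (GG_le_Lfn hab hγ L hμ)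
      _ = Lfn γ' x t μ := ENNReal.toReal_ofReal (Lfn_nonneg hγ x t μ)

end LenAux
namespace LenAux

open Real

variable {a b : ℝ} {γ : ℝ → ℂ}

lemma integral_abs_cos (ψ : ℝ) : ∫ u in ψ..(ψ + Real.pi), |Real.cos u| = 2 := by
  have hper : Function.Periodic (fun u => |Real.cos u|) Real.pi := by
    intro u; simp [Real.cos_add_pi]
  have := hper.intervalIntegral_add_eq ψ (-(Real.pi/2))
  rw [this]
  have h2 : -(Real.pi/2) + Real.pi = Real.pi/2 := by ring
  rw [h2]
  have hcong : ∫ u in (-(Real.pi/2))..(Real.pi/2), |Real.cos u|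
      = ∫ u in (-(Real.pi/2))..(Real.pi/2), Real.cos u := by
    refine intervalIntegral.integral_congr fun u hu => ?_
    rw [uIcc_of_le (by linarith [Real.pi_pos] : -(Real.pi/2) ≤ Real.pi/2)] at hu
    exact abs_of_nonneg (Real.cos_nonneg_of_mem_Icc hu)
  rw [hcong, integral_cos]
  norm_num

lemma projPerp_sub (t : ℝ) (z w : ℂ) : projPerp t z - projPerp t w
    = ((z - w) * Complex.exp (-(((t : ℂ) + 1 / 2) * (Real.pi:ℂ) * Complex.I))).re := by
  rw [projPerp, projPerp, ← Complex.sub_re, ← sub_mul]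

lemma dist_projPerp_eq (t : ℝ) (z w : ℂ) :
    dist (projPerp t z) (projPerp t w)
      = ‖z - w‖ *
        |Real.cos (Real.pi * t + (Real.pi/2 - Complex.arg (z - w)))| := by
  set ζ := z - w with hζ
  set R := ‖ζ‖ with hR
  set φ := Complex.arg ζ with hφ
  have key : projPerp t z - projPerp t w = R * Real.cos (φ - (t + 1/2) * Real.pi) := by
    rw [projPerp_sub]
    have h1 : ζ = (R:ℂ) * Complex.exp ((φ:ℂ) * Complex.I) := by
      rw [hR, hφ]; exact (Complex.norm_mul_exp_arg_mul_I ζ).symm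
    rw [← hζ, h1, mul_assoc, ← Complex.exp_add]
    have h2 : (φ:ℂ) * Complex.I + -(((t : ℂ) + 1 / 2) * (Real.pi:ℂ) * Complex.I)
        = ((φ - (t + 1/2) * Real.pi : ℝ) : ℂ) * Complex.I := by
      push_cast; ring
    rw [h2, Complex.re_ofReal_mul, Complex.exp_ofReal_mul_I_re]
  rw [Real.dist_eq, key, abs_mul, abs_of_nonneg (by positivity : (0:ℝ) ≤ R)]
  congr 1
  rw [← Real.cos_neg]
  congr 1
  ring

lemma integral01_dist_projPerp (z w : ℂ) :
    ∫ t in (0:ℝ)..1, dist (projPerp t z) (projPerp t w)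
      = (2 / Real.pi) * dist z w := by
  have hπ : (0:ℝ) < Real.pi := Real.pi_pos
  have hcong : ∀ t, dist (projPerp t z) (projPerp t w)
      = ‖z - w‖ *
        |Real.cos (Real.pi * t + (Real.pi/2 - Complex.arg (z - w)))| :=
    fun t => dist_projPerp_eq t z w
  rw [intervalIntegral.integral_congr (fun t _ => hcong t)]
  rw [intervalIntegral.integral_const_mul]
  set c := Real.pi/2 - Complex.arg (z - w) with hc
  have hcomp := intervalIntegral.integral_comp_mul_add (a := (0:ℝ)) (b := 1)
    (f := fun u => |Real.cos u|) (c := Real.pi) hπ.ne' c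
  rw [hcomp]
  have h1 : Real.pi * 0 + c = c := by ring
  have h2 : Real.pi * 1 + c = c + Real.pi := by ring
  rw [h1, h2, integral_abs_cos c]
  rw [Complex.dist_eq, smul_eq_mul]
  ring

lemma continuous_projPerp (t : ℝ) : Continuous (projPerp t) :=
  Complex.continuous_re.comp (continuous_mul_right _)

/-- pointwise lower bound via a fixed pair of points in the image -/
lemma Lfn_ge_pair (hab : a ≤ b) (hγ : ContinuousOn γ (Icc a b))
    (hd : Metric.diam (γ '' Icc a b) ≤ 1/2)
    {x t μ : ℝ} (hμl : 1/2 ≤ μ) {z w : ℂ}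
    (hz : z ∈ γ '' Icc a b) (hw : w ∈ γ '' Icc a b) :
    dist (projPerp t z) (projPerp t w) / 2 ≤ Lfn (fun s : Icc a b => γ s) x t μ := by
  have hμ : 0 < μ := by linarith
  have hDd : Metric.diam (projPerp t '' (γ '' Icc a b)) ≤ Metric.diam (γ '' Icc a b) := by
    have hbase : (fun s : Icc a b => γ s) '' univ = γ '' Icc a b := by
      calc (fun s : Icc a b => γ s) '' univ = range (γ ∘ Subtype.val) := by
            rw [image_univ]; rfl
        _ = γ '' (range Subtype.val) := range_comp γ _
        _ = γ '' Icc a b := by rw [Subtype.range_coe]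
    rw [show projPerp t '' (γ '' Icc a b)
        = projPerp t '' ((fun s : Icc a b => γ s) '' univ) by rw [hbase]]
    exact normT_le_diam hγ t univ
  have hDμ : Metric.diam (projPerp t '' (γ '' Icc a b)) ≤ μ := by linarith
  have hbd : Bornology.IsBounded (projPerp t '' (γ '' Icc a b)) :=
    (((isCompact_Icc.image_of_continuousOn hγ)).image (continuous_projPerp t)).isBounded
  have hdist : dist (projPerp t z) (projPerp t w)
      ≤ Metric.diam (projPerp t '' (γ '' Icc a b)) :=
    Metric.dist_le_diam_of_mem hbd ⟨z, hz, rfl⟩ ⟨w, hw, rfl⟩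
  have := Lfn_ge_half hab hγ hμ hDμ (x := x)
  linarith

end LenAux
namespace LenAux

variable {a b : ℝ} {γ : ℝ → ℂ}

lemma continuous_projPerp_t (z : ℂ) : Continuous fun t : ℝ => projPerp t z := by
  unfold projPerp
  apply Complex.continuous_re.comp
  apply continuous_const.mul
  apply Complex.continuous_exp.comp
  apply Continuous.neg
  exact (((Complex.continuous_ofReal).add continuous_const).mul continuous_const).mul
    continuous_const

set_option maxHeartbeats 1000000 in
lemma lenOn_ge (hab : a ≤ b) (hγ : ContinuousOn γ (Icc a b))
    (hd : Metric.diam (γ '' Icc a b) ≤ 1/2) {z w : ℂ}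
    (hz : z ∈ γ '' Icc a b) (hw : w ∈ γ '' Icc a b) :
    (1/(2*Real.pi)) * dist z w ≤ lenOn γ a b := by
  classical
  have hπ : (0:ℝ) < Real.pi := Real.pi_pos
  set d := Metric.diam (γ '' Icc a b) with hddef
  have hd0 : 0 ≤ d := Metric.diam_nonneg
  have hΦm : Measurable (Phi a b γ) := measurable_Phi a b γ
  have hΦ0 : ∀ v : W, 0 ≤ Phi a b γ v := fun v => Phi_nonneg v
  have hΦ2 : ∀ v : W, Phi a b γ v ≤ 2*d := fun v => Phi_le hab hγ v
  have hint_x : ∀ t μ : ℝ, Integrable (fun x => Phi a b γ (x, t, μ))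
      (volume.restrict (Ioc (0:ℝ) 1)) := by
    intro t μ
    refine (integrable_const (2*d)).mono'
      ((hΦm.comp (measurable_id.prodMk measurable_const)).aestronglyMeasurable) ?_
    refine ae_of_all _ fun x => ?_
    rw [Real.norm_eq_abs, abs_of_nonneg (hΦ0 _)]
    exact hΦ2 _
  set B2 : ℝ × ℝ → ℝ := fun p => ∫ x in Ioc (0:ℝ) 1, Phi a b γ (x, p.2, p.1) with hB2def
  have hB2m : StronglyMeasurable B2 := by
    have hm : StronglyMeasurable (fun q : (ℝ × ℝ) × ℝ => Phi a b γ (q.2, q.1.2, q.1.1)) :=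
      (hΦm.comp (measurable_snd.prodMk
        ((measurable_fst.snd).prodMk measurable_fst.fst))).stronglyMeasurable
    exact hm.integral_prod_right'
  have hB2_0 : ∀ p, 0 ≤ B2 p := fun p => integral_nonneg fun x => hΦ0 _
  have hB2_2 : ∀ p, B2 p ≤ 2*d := by
    intro p
    calc B2 p ≤ ∫ _ in Ioc (0:ℝ) 1, (2*d) :=
          integral_mono (hint_x _ _) (integrable_const _) fun x => hΦ2 _
      _ = 2*d := by simp [Real.volume_Ioc]
  have hint_t : ∀ μ : ℝ, Integrable (fun t => B2 (μ, t)) (volume.restrict (Ioc (0:ℝ) 1)) := by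
    intro μ
    refine (integrable_const (2*d)).mono'
      ((hB2m.measurable.comp (measurable_const.prodMk measurable_id)).aestronglyMeasurable) ?_
    refine ae_of_all _ fun t => ?_
    rw [Real.norm_eq_abs, abs_of_nonneg (hB2_0 _)]
    exact hB2_2 _
  set B1 : ℝ → ℝ := fun μ => ∫ t in Ioc (0:ℝ) 1, B2 (μ, t) with hB1def
  have hB1m : StronglyMeasurable B1 := hB2m.integral_prod_right'
  have hB1_0 : ∀ μ, 0 ≤ B1 μ := fun μ => integral_nonneg fun t => hB2_0 _
  have hB1_2 : ∀ μ, B1 μ ≤ 2*d := by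
    intro μ
    calc B1 μ ≤ ∫ _ in Ioc (0:ℝ) 1, (2*d) :=
          integral_mono (hint_t _) (integrable_const _) fun t => hB2_2 _
      _ = 2*d := by simp [Real.volume_Ioc]
  have hint_μ : IntegrableOn B1 (Ioc (0:ℝ) 1) volume := by
    refine (integrable_const (2*d)).mono' hB1m.aestronglyMeasurable ?_
    refine ae_of_all _ fun μ => ?_
    rw [Real.norm_eq_abs, abs_of_nonneg (hB1_0 _)]
    exact hB1_2 _
  -- identification of the iterated integral
  have hE1 : ∀ (t : ℝ) {μ : ℝ}, 0 < μ →
      (∫ x in (0:ℝ)..1, Lfn (fun s : Icc a b => γ s) x t μ) = B2 (μ, t) := by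
    intro t μ hμ
    rw [intervalIntegral.integral_of_le zero_le_one]
    exact integral_congr_ae (ae_of_all _ fun x => Lfn_eq_Phi hab hγ hμ)
  have hE2 : ∀ {μ : ℝ}, 0 < μ →
      (∫ t in (0:ℝ)..1, ∫ x in (0:ℝ)..1, Lfn (fun s : Icc a b => γ s) x t μ) = B1 μ := by
    intro μ hμ
    rw [intervalIntegral.integral_of_le zero_le_one]
    exact integral_congr_ae (ae_of_all _ fun t => hE1 t hμ)
  have hlen : lenOn γ a b = ∫ μ in Ioc (0:ℝ) 1, B1 μ := by
    rw [lenOn, len, intervalIntegral.integral_of_le zero_le_one]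
    refine setIntegral_congr_fun measurableSet_Ioc fun μ hμ => ?_
    exact hE2 hμ.1
  -- the lower bound function
  have hℓc : Continuous fun t : ℝ => dist (projPerp t z) (projPerp t w) :=
    (continuous_projPerp_t z).dist (continuous_projPerp_t w)
  have hℓint : Integrable (fun t : ℝ => dist (projPerp t z) (projPerp t w))
      (volume.restrict (Ioc (0:ℝ) 1)) := by
    refine (integrable_const (dist z w)).mono' hℓc.aestronglyMeasurable ?_
    refine ae_of_all _ fun t => ?_
    rw [Real.norm_eq_abs, abs_of_nonneg dist_nonneg]
    exact projPerp_lip t z w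
  have hL1 : ∀ (t μ : ℝ), 1/2 ≤ μ →
      dist (projPerp t z) (projPerp t w) / 2 ≤ B2 (μ, t) := by
    intro t μ hμl
    have hμ : (0:ℝ) < μ := by linarith
    have hpt : ∀ x : ℝ, dist (projPerp t z) (projPerp t w) / 2 ≤ Phi a b γ (x, t, μ) := by
      intro x
      rw [← Lfn_eq_Phi hab hγ hμ]
      exact Lfn_ge_pair hab hγ hd hμl hz hw
    calc dist (projPerp t z) (projPerp t w) / 2
        = ∫ _ in Ioc (0:ℝ) 1, (dist (projPerp t z) (projPerp t w) / 2) := by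
          simp [Real.volume_Ioc]
      _ ≤ B2 (μ, t) := integral_mono (integrable_const _) (hint_x t μ) hpt
  have hJ : (∫ t in Ioc (0:ℝ) 1, dist (projPerp t z) (projPerp t w))
      = (2/Real.pi) * dist z w := by
    rw [← intervalIntegral.integral_of_le zero_le_one]
    exact integral01_dist_projPerp z w
  have hL2 : ∀ μ : ℝ, 1/2 ≤ μ → (Real.pi)⁻¹ * dist z w ≤ B1 μ := by
    intro μ hμl
    have : (∫ t in Ioc (0:ℝ) 1, dist (projPerp t z) (projPerp t w) / 2) ≤ B1 μ := by
      refine integral_mono (hℓint.div_const 2) (hint_t μ) fun t => hL1 t μ hμl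
    rw [integral_div, hJ] at this
    have heq : (Real.pi)⁻¹ * dist z w = ((2/Real.pi) * dist z w)/2 := by
      ring
    rw [heq]
    exact this
  -- assembling
  have hsub : Ioc (1/2 : ℝ) 1 ⊆ Ioc (0:ℝ) 1 := Ioc_subset_Ioc (by norm_num) le_rfl
  have hmono1 : (∫ μ in Ioc (1/2 : ℝ) 1, B1 μ) ≤ ∫ μ in Ioc (0:ℝ) 1, B1 μ := by
    refine setIntegral_mono_set hint_μ (ae_of_all _ fun μ => hB1_0 μ) ?_
    exact HasSubset.Subset.eventuallyLE hsub
  have hmono2 : (∫ _ in Ioc (1/2 : ℝ) 1, ((Real.pi)⁻¹ * dist z w))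
      ≤ ∫ μ in Ioc (1/2 : ℝ) 1, B1 μ := by
    refine setIntegral_mono_on (integrableOn_const ?_) (hint_μ.mono_set hsub)
      measurableSet_Ioc fun μ hμ => hL2 μ (le_of_lt hμ.1)
    · rw [Real.volume_Ioc]; exact ENNReal.ofReal_ne_top
  have hconst : (∫ _ in Ioc (1/2 : ℝ) 1, ((Real.pi)⁻¹ * dist z w))
      = ((Real.pi)⁻¹ * dist z w) * (1/2) := by
    rw [setIntegral_const, Real.volume_real_Ioc_of_le (by norm_num : (1/2:ℝ) ≤ 1), smul_eq_mul,
      show (1:ℝ) - 1/2 = 1/2 by norm_num]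
    ring
  have hfinal : ((Real.pi)⁻¹ * dist z w) * (1/2) ≤ lenOn γ a b := by
    rw [hlen]
    calc ((Real.pi)⁻¹ * dist z w) * (1/2)
        = ∫ _ in Ioc (1/2 : ℝ) 1, ((Real.pi)⁻¹ * dist z w) := hconst.symm
      _ ≤ ∫ μ in Ioc (1/2 : ℝ) 1, B1 μ := hmono2
      _ ≤ ∫ μ in Ioc (0:ℝ) 1, B1 μ := hmono1
  have heq2 : (1/(2*Real.pi)) * dist z w = ((Real.pi)⁻¹ * dist z w) * (1/2) := by
    ring
  rw [heq2]
  exact hfinal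

end LenAux

/-- **Estimate (**).** If `γ : [a,b] → ℂ` is a path with `diam(γ([a,b])) ≤ 1/2`, then
`(1/(2π))·diam(γ([a,b])) ≤ len(γ) ≤ 2·diam(γ([a,b]))`. -/
theorem len_estimate_by_diam (a b : ℝ) (hab : a ≤ b) (γ : ℝ → ℂ)
    (hγ : ContinuousOn γ (Icc a b))
    (hd : Metric.diam (γ '' Icc a b) ≤ 1 / 2) :
    (1 / (2 * Real.pi)) * Metric.diam (γ '' Icc a b) ≤ lenOn γ a b ∧
    lenOn γ a b ≤ 2 * Metric.diam (γ '' Icc a b) := by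
  have hπ : (0:ℝ) < Real.pi := Real.pi_pos
  have hd0 : 0 ≤ Metric.diam (γ '' Icc a b) := Metric.diam_nonneg
  refine ⟨?_, (LenAux.lenOn_nonneg_le hab hγ).2⟩
  rcases eq_or_lt_of_le hd0 with heq | hdpos
  · rw [← heq]
    simpa using (LenAux.lenOn_nonneg_le hab hγ).1
  · refine le_of_forall_pos_le_add fun η hη => ?_
    set d := Metric.diam (γ '' Icc a b) with hddef
    set ε : ℝ := min d (2*Real.pi*η) with hεdef
    have hε : 0 < ε := lt_min hdpos (by positivity)
    have hpair : ∃ z ∈ γ '' Icc a b, ∃ w ∈ γ '' Icc a b, d - ε < dist z w := by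
      by_contra hcon
      push_neg at hcon
      have hle : d ≤ d - ε := Metric.diam_le_of_forall_dist_le
        (by simp only [sub_nonneg]; exact min_le_left _ _) hcon
      linarith
    obtain ⟨z, hz, w, hw, hdist⟩ := hpair
    have hbase := LenAux.lenOn_ge hab hγ hd hz hw
    have h1 : (1/(2*Real.pi)) * (d - ε) ≤ (1/(2*Real.pi)) * dist z w :=
      mul_le_mul_of_nonneg_left (le_of_lt hdist) (by positivity)
    have h2 : (1/(2*Real.pi)) * ε ≤ η := by
      have : ε ≤ 2*Real.pi*η := min_le_right _ _
      rw [div_mul_eq_mul_div, one_mul, div_le_iff₀ (by positivity : (0:ℝ) < 2*Real.pi)]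
      linarith [this]
      
    calc (1/(2*Real.pi)) * d = (1/(2*Real.pi)) * (d - ε) + (1/(2*Real.pi)) * ε := by ring
      _ ≤ lenOn γ a b + η := add_le_add (le_trans h1 hbase) h2
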